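/- There exists a constant C depending only on the dimension d such that for every continuously differentiable map b : ℝ^d → ℝ^m and all distinct points x, y ∈ ℝ^d, |b(x) − b(y)| ≤ C ∫_{B(x,y)} |db(z)| (1/|x−z|^{d−1} + 1/|y−z|^{d−1}) dz, where |db(z)| denotes the operator norm of the derivative of b at z and B(x,y) denotes the open ball with center (x+y)/2 and diameter |x−y|. -/

import Mathlib

open MeasureTheory Metric Set
open scoped ENNReal

variable {d : ℕ}

lemma map_affine (x : EuclideanSpace ℝ (Fin d)) {t : ℝ} (ht : 0 < t) :
    Measure.map (fun z => x + t • (z - x)) (volume : Measure (EuclideanSpace ℝ (Fin d)))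
      = ENNReal.ofReal ((t ^ d)⁻¹) • volume := by
  have hcomp : (fun z : EuclideanSpace ℝ (Fin d) => x + t • (z - x))
      = (fun w => x + w) ∘ (fun w => t • w) ∘ (fun z => z + (-x)) := by
    funext z; simp [sub_eq_add_neg]
  rw [hcomp, ← Function.comp_assoc]
  rw [← Measure.map_map (by fun_prop) (by fun_prop)]
  rw [map_add_right_eq_self volume (-x)]
  rw [← Measure.map_map (by fun_prop) (by fun_prop)]
  rw [Measure.map_addHaar_smul volume ht.ne']
  rw [Measure.map_smul, map_add_left_eq_self volume x, finrank_euclideanSpace_fin,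
    abs_of_nonneg (by positivity)]

lemma lintegral_comp_affine {f : EuclideanSpace ℝ (Fin d) → ℝ≥0∞} (hf : Measurable f)
    (x : EuclideanSpace ℝ (Fin d)) {t : ℝ} (ht : 0 < t)
    {s : Set (EuclideanSpace ℝ (Fin d))} (hs : MeasurableSet s) :
    ∫⁻ z in (fun z => x + t • (z - x)) ⁻¹' s, f (x + t • (z - x))
      = ENNReal.ofReal ((t ^ d)⁻¹) * ∫⁻ w in s, f w := by
  set φ : EuclideanSpace ℝ (Fin d) → EuclideanSpace ℝ (Fin d) := fun z => x + t • (z - x) with hφdef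
  have hφ : Measurable φ := by fun_prop
  have h1 : ∫⁻ z in φ ⁻¹' s, f (φ z) = ∫⁻ z, (s.indicator f) (φ z) := by
    rw [← lintegral_indicator (hφ hs)]
    exact lintegral_congr fun z => by by_cases hz : φ z ∈ s <;> simp [Set.indicator, hz]
  rw [h1, ← lintegral_map (hf.indicator hs) hφ, hφdef, map_affine x ht,
    lintegral_smul_measure, lintegral_indicator hs, smul_eq_mul]

lemma ftc_seg {E F : Type*} [NormedAddCommGroup E] [NormedSpace ℝ E]
    [NormedAddCommGroup F] [NormedSpace ℝ F] [CompleteSpace F]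
    {b : E → F} (hb : ContDiff ℝ 1 b) (x z : E) :
    ‖b z - b x‖ ≤ ∫ t in (0:ℝ)..1, ‖fderiv ℝ b (x + t • (z - x))‖ * ‖z - x‖ := by
  have hDc : Continuous (fderiv ℝ b) := hb.continuous_fderiv one_ne_zero
  have hγ : Continuous fun t : ℝ => x + t • (z - x) := by fun_prop
  have key : ∀ t : ℝ, HasDerivAt (fun s => b (x + s • (z - x)))
      (fderiv ℝ b (x + t • (z - x)) (z - x)) t := by
    intro t
    have h1 : HasDerivAt (fun s : ℝ => x + s • (z - x)) (z - x) t := by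
      simpa using ((hasDerivAt_id t).smul_const (z - x)).const_add x
    exact ((hb.differentiable one_ne_zero (x + t • (z - x))).hasFDerivAt).comp_hasDerivAt t h1
  have hcont : Continuous fun t : ℝ => fderiv ℝ b (x + t • (z - x)) (z - x) := by
    exact (ContinuousLinearMap.apply ℝ F (z - x)).continuous.comp (hDc.comp hγ)
  have heq : b z - b x = ∫ t in (0:ℝ)..1, fderiv ℝ b (x + t • (z - x)) (z - x) := by
    rw [intervalIntegral.integral_eq_sub_of_hasDerivAt (fun t _ => key t)
      (hcont.intervalIntegrable 0 1)]
    simp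
  rw [heq]
  calc ‖∫ t in (0:ℝ)..1, fderiv ℝ b (x + t • (z - x)) (z - x)‖
      ≤ ∫ t in (0:ℝ)..1, ‖fderiv ℝ b (x + t • (z - x)) (z - x)‖ :=
        intervalIntegral.norm_integral_le_integral_norm zero_le_one
    _ ≤ ∫ t in (0:ℝ)..1, ‖fderiv ℝ b (x + t • (z - x))‖ * ‖z - x‖ := by
        apply intervalIntegral.integral_mono_on zero_le_one (hcont.norm.intervalIntegrable 0 1)
          (((hDc.comp hγ).norm.mul continuous_const).intervalIntegrable 0 1)
        intro t _
        exact ContinuousLinearMap.le_opNorm _ _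

lemma kernel_finite (hd : 1 ≤ d) (x : EuclideanSpace ℝ (Fin d)) {R : ℝ} (hR : 0 < R) :
    ∫⁻ w in ball x R, ENNReal.ofReal (1 / ‖w - x‖ ^ (d - 1)) < ⊤ := by
  haveI : Nontrivial (EuclideanSpace ℝ (Fin d)) :=
    Module.nontrivial_of_finrank_pos (R := ℝ) (by rw [finrank_euclideanSpace_fin]; omega)
  set μ := (volume : Measure (EuclideanSpace ℝ (Fin d)))
  set B1 := μ (ball (0 : EuclideanSpace ℝ (Fin d)) 1) with hB1
  have hB1top : B1 < ⊤ := measure_ball_lt_top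
  set A : ℕ → Set (EuclideanSpace ℝ (Fin d)) :=
    fun n => ball x (R / 2 ^ n) \ ball x (R / 2 ^ (n + 1)) with hA
  have hcover : ball x R ⊆ {x} ∪ ⋃ n, A n := by
    intro w hw
    rcases eq_or_ne w x with h | h
    · exact Or.inl (by simp [h])
    · right
      have hwx : 0 < dist w x := dist_pos.2 h
      have hex : ∃ n : ℕ, R / 2 ^ (n + 1) ≤ dist w x := by
        obtain ⟨n, hn⟩ := pow_unbounded_of_one_lt (R / dist w x) (one_lt_two (α := ℝ))
        refine ⟨n, ?_⟩
        rw [div_le_iff₀ (by positivity)]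
        have h1 : R < 2 ^ n * dist w x := (div_lt_iff₀ hwx).1 hn
        have h2' : (2:ℝ) ^ n ≤ 2 ^ (n + 1) := pow_le_pow_right₀ one_le_two (Nat.le_succ n)
        have h2 := mul_le_mul_of_nonneg_right h2' hwx.le
        rw [mul_comm (dist w x)]
        linarith
      classical
      let n := Nat.find hex
      refine mem_iUnion.2 ⟨n, ?_, ?_⟩
      · rcases Nat.eq_zero_or_pos n with h0 | h0
        · simpa [h0, mem_ball] using hw
        · have := Nat.find_min hex (m := n - 1) (by omega)
          push_neg at this
          simp only [mem_ball]
          calc dist w x < R / 2 ^ (n - 1 + 1) := this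
            _ = R / 2 ^ n := by congr 1; congr 1; omega
      · have := Nat.find_spec hex
        simpa [mem_ball, not_lt] using this
  calc ∫⁻ w in ball x R, ENNReal.ofReal (1 / ‖w - x‖ ^ (d - 1))
      ≤ ∫⁻ w in {x} ∪ ⋃ n, A n, ENNReal.ofReal (1 / ‖w - x‖ ^ (d - 1)) :=
        lintegral_mono_set hcover
    _ ≤ (∫⁻ w in {x}, ENNReal.ofReal (1 / ‖w - x‖ ^ (d - 1)))
        + ∫⁻ w in ⋃ n, A n, ENNReal.ofReal (1 / ‖w - x‖ ^ (d - 1)) := lintegral_union_le _ _ _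
    _ ≤ 0 + ∑' n, ∫⁻ w in A n, ENNReal.ofReal (1 / ‖w - x‖ ^ (d - 1)) := by
        gcongr
        · rw [show ({x} : Set (EuclideanSpace ℝ (Fin d))) = {x} from rfl]
          have : μ {x} = 0 := measure_singleton x
          exact le_of_eq (by rw [setLIntegral_measure_zero _ _ this])
        · exact lintegral_iUnion_le _ _
    _ ≤ ∑' n, ENNReal.ofReal (2 ^ (d - 1) * R * (1 / 2) ^ n) * B1 := by
        rw [zero_add]
        apply ENNReal.tsum_le_tsum
        intro n
        have hbound : ∀ w ∈ A n, ENNReal.ofReal (1 / ‖w - x‖ ^ (d - 1))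
            ≤ ENNReal.ofReal (1 / (R / 2 ^ (n + 1)) ^ (d - 1)) := by
          intro w hw
          apply ENNReal.ofReal_le_ofReal
          have h1 : R / 2 ^ (n + 1) ≤ ‖w - x‖ := by
            have := hw.2
            simpa [mem_ball, dist_eq_norm, not_lt] using this
          have h2 : (0:ℝ) < R / 2 ^ (n + 1) := by positivity
          apply one_div_le_one_div_of_le (by positivity)
          exact pow_le_pow_left₀ h2.le h1 _
        calc ∫⁻ w in A n, ENNReal.ofReal (1 / ‖w - x‖ ^ (d - 1))
            ≤ ∫⁻ _ in A n, ENNReal.ofReal (1 / (R / 2 ^ (n + 1)) ^ (d - 1)) := by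
              apply setLIntegral_mono' (by
                exact (measurableSet_ball.diff measurableSet_ball)) hbound
          _ = ENNReal.ofReal (1 / (R / 2 ^ (n + 1)) ^ (d - 1)) * μ (A n) :=
              setLIntegral_const _ _
          _ ≤ ENNReal.ofReal (1 / (R / 2 ^ (n + 1)) ^ (d - 1)) * μ (ball x (R / 2 ^ n)) := by
              gcongr
              exact Set.diff_subset
          _ = ENNReal.ofReal (2 ^ (d - 1) * R * (1 / 2) ^ n) * B1 := by
              rw [Measure.addHaar_ball μ x (by positivity), finrank_euclideanSpace_fin,
                ← mul_assoc, ← ENNReal.ofReal_mul (by positivity)]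
              congr 2
              have hd' : d - 1 + 1 = d := by omega
              have key : (1 / (R / 2 ^ (n + 1)) ^ (d - 1)) * (R / 2 ^ n) ^ d
                  = 2 ^ (d - 1) * R * (1 / 2) ^ n := by
                rw [← hd']
                set k := d - 1
                simp only [Nat.add_sub_cancel]
                have h2n : (2:ℝ) ^ n ≠ 0 := by positivity
                have hR0 : R ≠ 0 := hR.ne'
                rw [div_pow, div_pow, pow_succ, pow_succ, one_div_div, mul_pow, pow_succ (2 ^ n)]
                field_simp
                rw [← mul_pow]; norm_num
              exact key
    _ < ⊤ := by
        have : ∑' n : ℕ, ENNReal.ofReal (2 ^ (d - 1) * R * (1 / 2) ^ n) * B1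
            = (ENNReal.ofReal (2 ^ (d - 1) * R) * B1) * ∑' n : ℕ, (ENNReal.ofReal (1 / 2)) ^ n := by
          rw [← ENNReal.tsum_mul_left]
          congr 1
          funext n
          rw [ENNReal.ofReal_mul (by positivity), ENNReal.ofReal_pow (by norm_num)]
          ring
        rw [this]
        apply ENNReal.mul_lt_top
        · exact ENNReal.mul_lt_top ENNReal.ofReal_lt_top hB1top
        · have h12 : ENNReal.ofReal (1/2 : ℝ) = (2:ℝ≥0∞)⁻¹ := by
            rw [one_div, ENNReal.ofReal_inv_of_pos (by norm_num), ENNReal.ofReal_ofNat]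
          rw [ENNReal.tsum_geometric, h12, ENNReal.one_sub_inv_two, inv_inv]
          exact ENNReal.ofNat_lt_top

lemma tbound (hd : 1 ≤ d) {r a Dw : ℝ} (hr : 0 < r) (hDw : 0 ≤ Dw) :
    ∫⁻ t in Ioc (0:ℝ) 1, ENNReal.ofReal ((t ^ (d+1))⁻¹) *
      (if a < 2*t*r then ENNReal.ofReal (Dw * a) else 0)
    ≤ ENNReal.ofReal ((2*r)^d / d) * ENNReal.ofReal (Dw * (1 / a ^ (d-1))) := by
  have hd0 : (0:ℝ) < d := by exact_mod_cast Nat.pos_of_ne_zero (by omega)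
  rcases le_or_gt a 0 with ha | ha
  · have h0 : ENNReal.ofReal (Dw * a) = 0 :=
      ENNReal.ofReal_eq_zero.2 (mul_nonpos_of_nonneg_of_nonpos hDw ha)
    simp only [h0, ite_self, mul_zero, lintegral_zero]
    exact zero_le
  · set q := a / (2*r) with hqdef
    have hq : 0 < q := by positivity
    have hiff : ∀ t : ℝ, (a < 2*t*r) ↔ q < t := by
      intro t
      rw [hqdef, div_lt_iff₀ (by positivity)]
      constructor <;> intro h <;> nlinarith
    have hsub : Ioc q 1 ⊆ Ioc (0:ℝ) 1 := Ioc_subset_Ioc_left hq.le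
    have hpt : ∀ t ∈ Ioc (0:ℝ) 1,
        ENNReal.ofReal ((t ^ (d+1))⁻¹) * (if a < 2*t*r then ENNReal.ofReal (Dw * a) else 0)
        = (Ioc q 1).indicator (fun t => ENNReal.ofReal ((t ^ (d+1))⁻¹) * ENNReal.ofReal (Dw * a)) t := by
      intro t ht
      have ht2 : t ≤ 1 := (mem_Ioc.mp ht).2
      by_cases hqt : q < t
      · rw [if_pos ((hiff t).2 hqt), Set.indicator_of_mem (mem_Ioc.mpr ⟨hqt, ht2⟩)]
      · rw [if_neg (fun h => hqt ((hiff t).1 h)),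
          Set.indicator_of_notMem (fun h => hqt (mem_Ioc.mp h).1), mul_zero]
    rw [setLIntegral_congr_fun measurableSet_Ioc hpt,
      lintegral_indicator measurableSet_Ioc,
      Measure.restrict_restrict measurableSet_Ioc, inter_eq_left.2 hsub]
    rcases le_or_gt 1 q with hq1 | hq1
    · rw [Ioc_eq_empty (not_lt.2 hq1), Measure.restrict_empty, lintegral_zero_measure]
      exact zero_le
    · rw [lintegral_mul_const' _ _ ENNReal.ofReal_ne_top]
      have hint : IntegrableOn (fun t : ℝ => (t ^ (d+1))⁻¹) (Ioc q 1) := by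
        apply (ContinuousOn.integrableOn_Icc ?_).mono_set Ioc_subset_Icc_self
        exact ContinuousOn.inv₀ (by fun_prop)
          (fun t ht => pow_ne_zero _ (ne_of_gt (lt_of_lt_of_le hq ht.1)))
      have hnn : 0 ≤ᵐ[volume.restrict (Ioc q 1)] fun t : ℝ => (t ^ (d+1))⁻¹ := by
        apply (ae_restrict_iff' measurableSet_Ioc).2
        exact ae_of_all _ fun t ht =>
          inv_nonneg.2 (pow_nonneg ((hq.trans ht.1).le) _)
      rw [← ofReal_integral_eq_lintegral_ofReal hint hnn]
      have hval : ∫ t in Ioc q 1, (t ^ (d+1))⁻¹ = ((q:ℝ)^d)⁻¹/d - 1/d := by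
        rw [← intervalIntegral.integral_of_le hq1.le]
        have hzpow : ∀ t : ℝ, (t ^ (d+1))⁻¹ = t ^ (-((d:ℤ)+1)) := by
          intro t
          rw [zpow_neg]
          norm_cast
        simp_rw [hzpow]
        rw [integral_zpow (Or.inr ⟨by omega, fun h => absurd
          ((mem_Icc.mp (by rwa [uIcc_of_le hq1.le] at h)).1) (not_le.2 hq)⟩)]
        have hd1 : (-((d:ℤ)+1)) + 1 = -(d:ℤ) := by ring
        rw [hd1, one_zpow, zpow_neg, zpow_natCast]
        push_cast
        have hd0' : (d:ℝ) ≠ 0 := hd0.ne'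
        field_simp
        have e1 : (d:ℝ) * (d:ℝ)⁻¹ = 1 := mul_inv_cancel₀ hd0'
        linear_combination (1 - q^d) * e1
      have hreal : (((q:ℝ)^d)⁻¹/d - 1/d) * (Dw * a) ≤ (2*r)^d / d * (Dw * (1 / a ^ (d-1))) := by
        have e1 : ((q:ℝ)^d)⁻¹/d * (Dw * a) = (2*r)^d / d * (Dw * (1 / a ^ (d-1))) := by
          obtain ⟨k, hk⟩ : ∃ k, d = k + 1 := ⟨d - 1, by omega⟩
          subst hk
          simp only [Nat.add_sub_cancel, hqdef]
          have hr0 : r ≠ 0 := hr.ne'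
          field_simp
          have e1 : r * r⁻¹ = 1 := mul_inv_cancel₀ hr0
          have e2 : r ^ k * r⁻¹ ^ k = 1 := by rw [← mul_pow, e1, one_pow]
          have e3 : ((1:ℝ) / 2) ^ k * 2 ^ k = 1 := by rw [← mul_pow]; norm_num
          have e : r * r ^ k * r⁻¹ * r⁻¹ ^ k * (1 / 2) ^ k * 2 ^ k = 1 := by
            calc _ = (r * r⁻¹) * (r ^ k * r⁻¹ ^ k) * (((1:ℝ) / 2) ^ k * 2 ^ k) := by ring
              _ = 1 := by rw [e1, e2, e3]; norm_num
          linear_combination (-(a * a ^ k * Dw)) * e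
        calc (((q:ℝ)^d)⁻¹/d - 1/d) * (Dw * a) ≤ ((q:ℝ)^d)⁻¹/d * (Dw * a) := by
              have hda : (0:ℝ) ≤ Dw * a := mul_nonneg hDw ha.le
              have hle : (((q:ℝ)^d)⁻¹/d - 1/d) ≤ ((q:ℝ)^d)⁻¹/d := by
                have : (0:ℝ) ≤ 1/d := by positivity
                linarith
              exact mul_le_mul_of_nonneg_right hle hda
          _ = (2*r)^d / d * (Dw * (1 / a ^ (d-1))) := e1
      have hX : (0:ℝ) ≤ ((q:ℝ)^d)⁻¹/d - 1/d := by
        have hqd : (q:ℝ)^d ≤ 1 := pow_le_one₀ hq.le hq1.le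
        have h1 : (1:ℝ) ≤ ((q:ℝ)^d)⁻¹ := by
          rw [← one_div]
          exact one_le_one_div (pow_pos hq d) hqd
        rw [sub_nonneg]
        gcongr
      calc ENNReal.ofReal (∫ t in Ioc q 1, (t ^ (d+1))⁻¹) * ENNReal.ofReal (Dw * a)
          = ENNReal.ofReal ((((q:ℝ)^d)⁻¹/d - 1/d) * (Dw * a)) := by
            rw [hval, ← ENNReal.ofReal_mul hX]
        _ ≤ ENNReal.ofReal ((2*r)^d / d * (Dw * (1 / a ^ (d-1)))) :=
            ENNReal.ofReal_le_ofReal hreal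
        _ = ENNReal.ofReal ((2*r)^d / d) * ENNReal.ofReal (Dw * (1 / a ^ (d-1))) :=
            ENNReal.ofReal_mul (by positivity)

lemma core (hd : 1 ≤ d) {m : ℕ} {b : EuclideanSpace ℝ (Fin d) → EuclideanSpace ℝ (Fin m)}
    (hb : ContDiff ℝ 1 b) (c x : EuclideanSpace ℝ (Fin d)) {r : ℝ} (hr : 0 < r)
    (hx : x ∈ closedBall c r) :
    ∫⁻ z in ball c r, ENNReal.ofReal ‖b z - b x‖
      ≤ ENNReal.ofReal ((2*r)^d / d) *
        ∫⁻ w in ball c r, ENNReal.ofReal (‖fderiv ℝ b w‖ * (1 / ‖w - x‖ ^ (d-1))) := by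
  classical
  set D : EuclideanSpace ℝ (Fin d) → ℝ := fun w => ‖fderiv ℝ b w‖ with hDdef
  have hDc : Continuous D := (hb.continuous_fderiv one_ne_zero).norm
  set S : ℝ → EuclideanSpace ℝ (Fin d) → ℝ≥0∞ := fun t w =>
    if ‖w - x‖ < 2*t*r then ENNReal.ofReal (D w * ‖w - x‖) else 0 with hSdef
  have hSme : Measurable (Function.uncurry S) := by
    have : Function.uncurry S = {p : ℝ × EuclideanSpace ℝ (Fin d) | ‖p.2 - x‖ < 2*p.1*r}.indicator
        (fun p => ENNReal.ofReal (D p.2 * ‖p.2 - x‖)) := by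
      funext p
      by_cases hp : ‖p.2 - x‖ < 2*p.1*r <;>
        simp [Function.uncurry, hSdef, hp, Set.indicator]
    rw [this]
    apply Measurable.indicator
    · exact ENNReal.measurable_ofReal.comp ((hDc.comp continuous_snd).mul
        ((continuous_snd.sub continuous_const).norm)).measurable
    · exact (isOpen_lt (by fun_prop) (by fun_prop)).measurableSet
  -- step 1 : pointwise FTC bound in ℝ≥0∞
  have step1 : ∀ z, ENNReal.ofReal ‖b z - b x‖
      ≤ ∫⁻ t in Ioc (0:ℝ) 1, ENNReal.ofReal (D (x + t • (z - x)) * ‖z - x‖) := by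
    intro z
    have h0 := ftc_seg hb x z
    rw [intervalIntegral.integral_of_le zero_le_one] at h0
    have hcont : Continuous fun t : ℝ => D (x + t • (z - x)) * ‖z - x‖ := by fun_prop
    have hint : IntegrableOn (fun t : ℝ => D (x + t • (z - x)) * ‖z - x‖) (Ioc 0 1) :=
      hcont.integrableOn_Ioc
    calc ENNReal.ofReal ‖b z - b x‖ ≤ ENNReal.ofReal (∫ t in Ioc (0:ℝ) 1,
          D (x + t • (z - x)) * ‖z - x‖) := ENNReal.ofReal_le_ofReal h0
      _ = _ := ofReal_integral_eq_lintegral_ofReal hint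
          (ae_of_all _ fun t => by positivity)
  -- per-t change of variables bound
  have step_t : ∀ t ∈ Ioc (0:ℝ) 1,
      (∫⁻ z in ball c r, ENNReal.ofReal (D (x + t • (z - x)) * ‖z - x‖))
        ≤ ENNReal.ofReal ((t ^ (d+1))⁻¹) * ∫⁻ w in ball c r, S t w := by
    intro t ht
    obtain ⟨ht0, ht1⟩ := mem_Ioc.mp ht
    set g : EuclideanSpace ℝ (Fin d) → ℝ≥0∞ :=
      fun w => ENNReal.ofReal (1/t) * ENNReal.ofReal (D w * ‖w - x‖) with hgdef
    have hgme : Measurable g :=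
      (measurable_const.mul (ENNReal.measurable_ofReal.comp
        ((hDc.mul (continuous_id.sub continuous_const).norm)).measurable))
    have hgz : ∀ z, ENNReal.ofReal (D (x + t • (z - x)) * ‖z - x‖) = g (x + t • (z - x)) := by
      intro z
      rw [hgdef]
      simp only
      rw [← ENNReal.ofReal_mul (by positivity)]
      congr 1
      have hnrm : ‖x + t • (z - x) - x‖ = t * ‖z - x‖ := by
        simp [norm_smul, abs_of_pos ht0]
      rw [hnrm]
      field_simp
    have hpre : ball c r = (fun z => x + t • (z - x)) ⁻¹' (ball (x + t • (c - x)) (t*r)) := by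
      ext z
      simp only [mem_preimage, mem_ball, dist_eq_norm]
      have hvec : x + t • (z - x) - (x + t • (c - x)) = t • (z - c) := by module
      rw [hvec, norm_smul, Real.norm_eq_abs, abs_of_pos ht0, mul_lt_mul_iff_right₀ ht0]
    have hsubB : ball (x + t • (c - x)) (t*r) ⊆ ball c r := by
      apply ball_subset_ball'
      have hxc : ‖x - c‖ ≤ r := by
        rw [← dist_eq_norm]; exact mem_closedBall.mp hx
      have hdist : dist (x + t • (c - x)) c = ‖(1-t) • (x - c)‖ := by
        rw [dist_eq_norm]; congr 1; module
      rw [hdist, norm_smul, Real.norm_eq_abs, abs_of_nonneg (by linarith)]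
      nlinarith
    calc ∫⁻ z in ball c r, ENNReal.ofReal (D (x + t • (z - x)) * ‖z - x‖)
        = ∫⁻ z in (fun z => x + t • (z - x)) ⁻¹' (ball (x + t • (c - x)) (t*r)),
            g (x + t • (z - x)) := by
          rw [← hpre]; exact lintegral_congr fun z => hgz z
      _ = ENNReal.ofReal ((t ^ d)⁻¹) * ∫⁻ w in ball (x + t • (c - x)) (t*r), g w :=
          lintegral_comp_affine hgme x ht0 measurableSet_ball
      _ = ENNReal.ofReal ((t ^ d)⁻¹) * (ENNReal.ofReal (1/t) *
            ∫⁻ w in ball (x + t • (c - x)) (t*r), ENNReal.ofReal (D w * ‖w - x‖)) := by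
          rw [lintegral_const_mul' _ _ ENNReal.ofReal_ne_top]
      _ ≤ ENNReal.ofReal ((t ^ d)⁻¹) * (ENNReal.ofReal (1/t) * ∫⁻ w in ball c r, S t w) := by
          apply mul_le_mul_right
          apply mul_le_mul_right
          rw [← lintegral_indicator measurableSet_ball, ← lintegral_indicator measurableSet_ball]
          apply lintegral_mono
          intro w
          by_cases hw : w ∈ ball (x + t • (c - x)) (t*r)
          · have hw1 : w ∈ ball c r := hsubB hw
            have hw2 : ‖w - x‖ < 2*t*r := by
              have h1 : ‖w - (x + t • (c - x))‖ < t*r := by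
                rw [← dist_eq_norm]; exact mem_ball.mp hw
              have h2 : ‖t • (c - x)‖ ≤ t*r := by
                rw [norm_smul, Real.norm_eq_abs, abs_of_pos ht0]
                have : ‖c - x‖ ≤ r := by
                  rw [norm_sub_rev, ← dist_eq_norm]; exact mem_closedBall.mp hx
                nlinarith
              have hsum : w - x = (w - (x + t • (c - x))) + t • (c - x) := by module
              calc ‖w - x‖ ≤ ‖w - (x + t • (c - x))‖ + ‖t • (c - x)‖ := by
                    rw [hsum]; exact norm_add_le _ _
                _ < 2*t*r := by linarith
            rw [Set.indicator_of_mem hw, Set.indicator_of_mem hw1, hSdef]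
            simp only [if_pos hw2]
            exact le_refl _
          · rw [Set.indicator_of_notMem hw]
            exact zero_le
      _ = ENNReal.ofReal ((t ^ (d+1))⁻¹) * ∫⁻ w in ball c r, S t w := by
          rw [← mul_assoc, ← ENNReal.ofReal_mul (by positivity)]
          congr 2
          rw [pow_succ]
          field_simp
  -- assemble
  calc ∫⁻ z in ball c r, ENNReal.ofReal ‖b z - b x‖
      ≤ ∫⁻ z in ball c r, ∫⁻ t in Ioc (0:ℝ) 1,
          ENNReal.ofReal (D (x + t • (z - x)) * ‖z - x‖) := lintegral_mono step1
    _ = ∫⁻ t in Ioc (0:ℝ) 1, ∫⁻ z in ball c r,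
          ENNReal.ofReal (D (x + t • (z - x)) * ‖z - x‖) := by
        apply lintegral_lintegral_swap
        apply Continuous.aemeasurable
        exact ENNReal.continuous_ofReal.comp (by fun_prop)
    _ ≤ ∫⁻ t in Ioc (0:ℝ) 1, ENNReal.ofReal ((t ^ (d+1))⁻¹) * ∫⁻ w in ball c r, S t w := by
        apply setLIntegral_mono ?_ step_t
        apply Measurable.mul
        · exact ENNReal.measurable_ofReal.comp ((measurable_id.pow_const _).inv)
        · exact hSme.lintegral_prod_right
    _ = ∫⁻ t in Ioc (0:ℝ) 1, ∫⁻ w in ball c r, ENNReal.ofReal ((t ^ (d+1))⁻¹) * S t w := by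
        apply lintegral_congr
        intro t
        rw [lintegral_const_mul' _ _ ENNReal.ofReal_ne_top]
    _ = ∫⁻ w in ball c r, ∫⁻ t in Ioc (0:ℝ) 1, ENNReal.ofReal ((t ^ (d+1))⁻¹) * S t w := by
        apply lintegral_lintegral_swap
        apply AEMeasurable.mul
        · exact (ENNReal.measurable_ofReal.comp
            ((measurable_fst.pow_const _).inv)).aemeasurable
        · exact hSme.aemeasurable
    _ ≤ ∫⁻ w in ball c r, ENNReal.ofReal ((2*r)^d / d) *
          ENNReal.ofReal (D w * (1 / ‖w - x‖ ^ (d-1))) := by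
        apply lintegral_mono
        intro w
        exact tbound hd hr (norm_nonneg _)
    _ = ENNReal.ofReal ((2*r)^d / d) *
          ∫⁻ w in ball c r, ENNReal.ofReal (‖fderiv ℝ b w‖ * (1 / ‖w - x‖ ^ (d-1))) := by
        rw [lintegral_const_mul' _ _ ENNReal.ofReal_ne_top]

/-- There exists a constant `C` depending only on the dimension `d` such
that for every `C¹` map `b : ℝ^d → ℝ^m` and all distinct points `x, y`,
`|b x - b y| ≤ C ∫_{B(x,y)} |db z| (1/|x-z|^{d-1} + 1/|y-z|^{d-1}) dz`,
where `B(x,y)` is the open ball of center `(x+y)/2` and diameter `|x-y|`. -/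
theorem stmt2 (d : ℕ) (hd : 1 ≤ d) :
    ∃ C > (0 : ℝ), ∀ (m : ℕ)
      (b : EuclideanSpace ℝ (Fin d) → EuclideanSpace ℝ (Fin m)),
      ContDiff ℝ 1 b →
      ∀ x y : EuclideanSpace ℝ (Fin d), x ≠ y →
        ‖b x - b y‖ ≤
          C * ∫ z in Metric.ball (midpoint ℝ x y) (‖x - y‖ / 2),
            ‖fderiv ℝ b z‖ * (1 / ‖x - z‖ ^ (d - 1) + 1 / ‖y - z‖ ^ (d - 1)) := by
  classical
  haveI : Nontrivial (EuclideanSpace ℝ (Fin d)) :=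
    Module.nontrivial_of_finrank_pos (R := ℝ) (by rw [finrank_euclideanSpace_fin]; omega)
  have hd0 : (0:ℝ) < d := by exact_mod_cast Nat.pos_of_ne_zero (by omega)
  set ω : ℝ := (volume (ball (0 : EuclideanSpace ℝ (Fin d)) 1)).toReal with hωdef
  have hω : 0 < ω := ENNReal.toReal_pos (measure_ball_pos volume 0 one_pos).ne'
    measure_ball_lt_top.ne
  refine ⟨2^d / (d * ω), by positivity, ?_⟩
  intro m b hb x y hxy
  set c := midpoint ℝ x y with hcdef
  set r : ℝ := ‖x - y‖ / 2 with hrdef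
  have hr : 0 < r := by
    have h := norm_pos_iff.mpr (sub_ne_zero.mpr hxy)
    rw [hrdef]; linarith
  have hxmem : x ∈ closedBall c r := by
    rw [mem_closedBall, hcdef, dist_left_midpoint, hrdef, dist_eq_norm]
    simp [Real.norm_eq_abs]
    linarith
  have hymem : y ∈ closedBall c r := by
    rw [mem_closedBall, hcdef, midpoint_comm, dist_left_midpoint, hrdef, dist_eq_norm,
      norm_sub_rev]
    simp [Real.norm_eq_abs]
    linarith
  set D : EuclideanSpace ℝ (Fin d) → ℝ := fun w => ‖fderiv ℝ b w‖ with hDdef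
  have hDc : Continuous D := (hb.continuous_fderiv one_ne_zero).norm
  set B := ball c r with hBdef
  set Lx := ∫⁻ w in B, ENNReal.ofReal (D w * (1 / ‖w - x‖ ^ (d-1))) with hLx
  set Ly := ∫⁻ w in B, ENNReal.ofReal (D w * (1 / ‖w - y‖ ^ (d-1))) with hLy
  set Ltot := ∫⁻ w in B, ENNReal.ofReal
    (D w * (1 / ‖x - w‖ ^ (d-1) + 1 / ‖y - w‖ ^ (d-1))) with hLtot
  have hker1 : Measurable fun w : EuclideanSpace ℝ (Fin d) => 1 / ‖w - x‖ ^ (d-1) :=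
    measurable_const.div (((continuous_id.sub continuous_const).norm.pow _).measurable)
  have hker2 : Measurable fun w : EuclideanSpace ℝ (Fin d) => 1 / ‖w - y‖ ^ (d-1) :=
    measurable_const.div (((continuous_id.sub continuous_const).norm.pow _).measurable)
  have hsplit : Ltot = Lx + Ly := by
    rw [hLtot, hLx, hLy, ← lintegral_add_left]
    · apply lintegral_congr
      intro w
      rw [← ENNReal.ofReal_add (by positivity) (by positivity), ← mul_add]
      rw [norm_sub_rev x w, norm_sub_rev y w]
    · exact ENNReal.measurable_ofReal.comp (hDc.measurable.mul hker1)
  -- finiteness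
  obtain ⟨M, hM⟩ := (isCompact_closedBall c r).exists_bound_of_continuousOn hDc.continuousOn
  have hM0 : 0 ≤ M := le_trans (norm_nonneg _) (hM c (mem_closedBall_self hr.le))
  have hfin : ∀ p : EuclideanSpace ℝ (Fin d), p ∈ closedBall c r →
      (∫⁻ w in B, ENNReal.ofReal (D w * (1 / ‖w - p‖ ^ (d-1)))) < ⊤ := by
    intro p hp
    have hincl : B ⊆ ball p (2*r) := by
      rw [hBdef]
      apply ball_subset_ball'
      have : dist c p ≤ r := by rw [dist_comm]; exact mem_closedBall.mp hp
      linarith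
    calc ∫⁻ w in B, ENNReal.ofReal (D w * (1 / ‖w - p‖ ^ (d-1)))
        ≤ ∫⁻ w in B, ENNReal.ofReal (M * (1 / ‖w - p‖ ^ (d-1))) := by
          apply setLIntegral_mono' measurableSet_ball
          intro w hw
          apply ENNReal.ofReal_le_ofReal
          apply mul_le_mul_of_nonneg_right _ (by positivity)
          have h := hM w (ball_subset_closedBall hw)
          rwa [Real.norm_eq_abs, abs_of_nonneg (norm_nonneg _)] at h
      _ = ENNReal.ofReal M * ∫⁻ w in B, ENNReal.ofReal (1 / ‖w - p‖ ^ (d-1)) := by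
          rw [← lintegral_const_mul' _ _ ENNReal.ofReal_ne_top]
          apply lintegral_congr
          intro w
          rw [← ENNReal.ofReal_mul hM0]
      _ ≤ ENNReal.ofReal M * ∫⁻ w in ball p (2*r), ENNReal.ofReal (1 / ‖w - p‖ ^ (d-1)) := by
          apply mul_le_mul_right
          exact lintegral_mono_set hincl
      _ < ⊤ := ENNReal.mul_lt_top ENNReal.ofReal_lt_top (kernel_finite hd p (by positivity))
  have hLxfin : Lx < ⊤ := hfin x hxmem
  have hLyfin : Ly < ⊤ := hfin y hymem
  have hLtotfin : Ltot ≠ ⊤ := by rw [hsplit]; exact (ENNReal.add_lt_top.2 ⟨hLxfin, hLyfin⟩).ne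
  -- main ENNReal chain
  have hmz : Measurable fun z => ENNReal.ofReal ‖b z - b x‖ :=
    ENNReal.measurable_ofReal.comp ((hb.continuous.sub continuous_const).norm.measurable)
  have key : ENNReal.ofReal ‖b x - b y‖ * volume B
      ≤ ENNReal.ofReal ((2*r)^d / d) * Ltot := by
    calc ENNReal.ofReal ‖b x - b y‖ * volume B
        = ∫⁻ _ in B, ENNReal.ofReal ‖b x - b y‖ := (setLIntegral_const _ _).symm
      _ ≤ ∫⁻ z in B, (ENNReal.ofReal ‖b z - b x‖ + ENNReal.ofReal ‖b z - b y‖) := by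
          apply lintegral_mono
          intro z
          show ENNReal.ofReal ‖b x - b y‖
            ≤ ENNReal.ofReal ‖b z - b x‖ + ENNReal.ofReal ‖b z - b y‖
          rw [← ENNReal.ofReal_add (norm_nonneg _) (norm_nonneg _)]
          apply ENNReal.ofReal_le_ofReal
          calc ‖b x - b y‖ = dist (b x) (b y) := (dist_eq_norm _ _).symm
            _ ≤ dist (b x) (b z) + dist (b z) (b y) := dist_triangle _ _ _
            _ = ‖b z - b x‖ + ‖b z - b y‖ := by
                rw [dist_eq_norm, dist_eq_norm, norm_sub_rev]
      _ = (∫⁻ z in B, ENNReal.ofReal ‖b z - b x‖) + ∫⁻ z in B, ENNReal.ofReal ‖b z - b y‖ :=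
          lintegral_add_left hmz _
      _ ≤ ENNReal.ofReal ((2*r)^d / d) * Lx + ENNReal.ofReal ((2*r)^d / d) * Ly :=
          add_le_add (core hd hb c x hr hxmem) (core hd hb c y hr hymem)
      _ = ENNReal.ofReal ((2*r)^d / d) * Ltot := by rw [hsplit, mul_add]
  -- convert to real
  have hI : (∫ z in B, D z * (1 / ‖x - z‖ ^ (d-1) + 1 / ‖y - z‖ ^ (d-1))) = Ltot.toReal := by
    rw [hLtot]
    rw [integral_eq_lintegral_of_nonneg_ae]
    · exact ae_of_all _ fun z => by positivity
    · exact (hDc.measurable.mul ((measurable_const.div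
        (((continuous_const.sub continuous_id).norm.pow _).measurable)).add
        (measurable_const.div
        (((continuous_const.sub continuous_id).norm.pow _).measurable)))).aestronglyMeasurable
  have hBvol : (volume B).toReal = r^d * ω := by
    rw [hBdef, Measure.addHaar_ball volume c hr.le, finrank_euclideanSpace_fin,
      ENNReal.toReal_mul, ENNReal.toReal_ofReal (by positivity), hωdef]
  have key2 : ‖b x - b y‖ * (r^d * ω) ≤ (2*r)^d / d * Ltot.toReal := by
    have h1 := ENNReal.toReal_mono
      (ENNReal.mul_ne_top ENNReal.ofReal_ne_top hLtotfin) key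
    rw [ENNReal.toReal_mul, ENNReal.toReal_mul, ENNReal.toReal_ofReal (norm_nonneg _),
      ENNReal.toReal_ofReal (by positivity), hBvol] at h1
    exact h1
  rw [hI]
  have hrw : (2*r)^d / d * Ltot.toReal = (2^d / (d * ω)) * Ltot.toReal * (r^d * ω) := by
    rw [mul_pow]
    field_simp
  rw [hrw] at key2
  exact le_of_mul_le_mul_right key2 (by positivity)
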